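/- Separation principle for joint approximation: let P, Q be positive definite and suppose (i) e^{-ε₁} I ⪯ T^{-1} P_s T^{-T} ⪯ e^{ε₁} I where T = P^{1/2}, and (ii) e^{-ε₂} T^T Q T ⪯ T^T Q_s T ⪯ e^{ε₂} T^T Q T. Then e^{-(ε₁+ε₂)} Q^{1/2} P Q^{1/2} and Q_s^{1/2} P_s Q_s^{1/2} satisfy: λ_i(Q_s^{1/2} P_s Q_s^{1/2}) lies within factor e^{±(ε₁+ε₂)} of λ_i(Q^{1/2} P Q^{1/2}) for every i. -/

import Mathlib

open Matrix

/-- Eigenvalues of a matrix, sorted in ascending order (junk value `0` if the matrix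
is not Hermitian). -/
noncomputable def eigAsc {d : ℕ} (A : Matrix (Fin d) (Fin d) ℝ) : Fin d → ℝ :=
  if h : A.IsHermitian then h.eigenvalues ∘ Tuple.sort h.eigenvalues else 0

namespace Matrix.PosSemidef

open scoped ComplexOrder

/-- The positive semidefinite square root of a positive semidefinite matrix (the definition
of `Matrix.PosSemidef.sqrt` in Mathlib of December 2024, since removed). -/
noncomputable def sqrt {n : Type*} [Fintype n] [DecidableEq n] {𝕜 : Type*} [RCLike 𝕜]
    {A : Matrix n n 𝕜} (hA : A.PosSemidef) : Matrix n n 𝕜 :=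
  hA.1.eigenvectorUnitary.1 * diagonal ((↑) ∘ (√·) ∘ hA.1.eigenvalues) *
  (star hA.1.eigenvectorUnitary : Matrix n n 𝕜)

end Matrix.PosSemidef

private lemma psd_sqrt_aux {n : ℕ} {A : Matrix (Fin n) (Fin n) ℝ} (hA : A.PosSemidef) :
    hA.sqrt.PosSemidef ∧ hA.sqrt * hA.sqrt = A := by
  set U : Matrix (Fin n) (Fin n) ℝ := (hA.1.eigenvectorUnitary : Matrix (Fin n) (Fin n) ℝ)
  have hUs : star U * U = 1 := Unitary.coe_star_mul_self hA.1.eigenvectorUnitary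
  have hsp := hA.1.spectral_theorem
  rw [Unitary.conjStarAlgAut_apply] at hsp
  have hD : (diagonal ((RCLike.ofReal : ℝ → ℝ) ∘ (√·) ∘ hA.1.eigenvalues)).PosSemidef :=
    PosSemidef.diagonal fun i => by simp [Real.sqrt_nonneg]
  constructor
  · have := hD.mul_mul_conjTranspose_same U
    exact this
  · show U * _ * star U * (U * _ * star U) = A
    simp only [Matrix.mul_assoc]
    rw [← Matrix.mul_assoc (star U) U, hUs, Matrix.one_mul, ← Matrix.mul_assoc (diagonal _) (diagonal _),
      diagonal_mul_diagonal]
    conv_rhs => rw [hsp]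
    rw [Matrix.mul_assoc]
    congr 3
    funext i
    simp [Real.mul_self_sqrt (hA.eigenvalues_nonneg i)]

section Aux

open Polynomial Finset

variable {n : ℕ}

private lemma real_conjTranspose (A : Matrix (Fin n) (Fin n) ℝ) : Aᴴ = Aᵀ := by
  ext i j; simp [conjTranspose_apply]

private lemma charmatrix_conj (U A : Matrix (Fin n) (Fin n) ℝ) (hU : IsUnit U.det) :
    charmatrix (U * A * U⁻¹) = U.map C * charmatrix A * U⁻¹.map C := by
  have hc : U.map (C : ℝ →+* ℝ[X]) * Matrix.scalar (Fin n) (X : ℝ[X]) =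
      Matrix.scalar (Fin n) (X : ℝ[X]) * U.map C :=
    (Matrix.scalar_commute (X : ℝ[X]) (Commute.all _) _).symm.eq
  rw [charmatrix, charmatrix, Matrix.mul_sub, Matrix.sub_mul]
  congr 1
  · rw [mul_assoc, ← mul_assoc (U.map C), hc, mul_assoc, ← Matrix.map_mul,
      mul_nonsing_inv _ hU, Matrix.map_one C (map_zero C) (map_one C), mul_one]
  · rw [RingHom.mapMatrix_apply, RingHom.mapMatrix_apply, ← Matrix.map_mul, ← Matrix.map_mul]

private lemma charpoly_conj (U A : Matrix (Fin n) (Fin n) ℝ) (hU : IsUnit U.det) :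
    (U * A * U⁻¹).charpoly = A.charpoly := by
  have h1 : (U.map (C : ℝ →+* ℝ[X])).det * (U⁻¹.map C).det = 1 := by
    rw [← det_mul, ← Matrix.map_mul, mul_nonsing_inv _ hU,
      Matrix.map_one C (map_zero C) (map_one C), det_one]
  rw [Matrix.charpoly, Matrix.charpoly, charmatrix_conj U A hU, det_mul, det_mul,
    mul_comm ((U.map C).det), mul_assoc, h1, mul_one]

private lemma charpoly_hermitian (A : Matrix (Fin n) (Fin n) ℝ) (hA : A.IsHermitian) :
    A.charpoly = ((Finset.univ.val.map hA.eigenvalues).map fun a => X - C a).prod := by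
  classical
  set U : Matrix (Fin n) (Fin n) ℝ := (hA.eigenvectorUnitary : Matrix (Fin n) (Fin n) ℝ)
  have hUs : U * star U = 1 := Unitary.coe_mul_star_self hA.eigenvectorUnitary
  have hU : IsUnit U.det := isUnit_det_of_right_inverse hUs
  have hinv : U⁻¹ = star U := inv_eq_right_inv hUs
  have hspec : A = U * diagonal hA.eigenvalues * U⁻¹ := by
    rw [hinv]
    have := hA.spectral_theorem
    simpa using this
  have hkey := charpoly_conj U (diagonal hA.eigenvalues) hU
  rw [← hspec] at hkey
  rw [hkey]
  have hdiag : charmatrix (diagonal hA.eigenvalues) =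
      diagonal fun i => (X : ℝ[X]) - C (hA.eigenvalues i) := by
    ext i j
    by_cases h : i = j
    · subst h; simp
    · simp [charmatrix_apply_ne _ _ _ h, diagonal_apply_ne _ h]
  rw [Matrix.charpoly, hdiag, det_diagonal, Multiset.map_map, ← Finset.prod_eq_multiset_prod]
  rfl

private lemma multiset_ofFn_sort (f : Fin n → ℝ) (σ : Equiv.Perm (Fin n)) :
    ((List.ofFn (f ∘ σ) : List ℝ) : Multiset ℝ) = Finset.univ.val.map f := by
  rw [← Fin.univ_val_map]
  have h : Finset.univ.val.map (⇑σ) = Finset.univ.val := by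
    conv_rhs => rw [← Finset.map_univ_equiv σ]
    rw [Finset.map_val]
    congr 1
  calc Finset.univ.val.map (f ∘ σ) = (Finset.univ.val.map ⇑σ).map f := by
        rw [Multiset.map_map]
    _ = Finset.univ.val.map f := by rw [h]

private lemma sorted_eq_of_multiset_eq (f g : Fin n → ℝ)
    (h : Finset.univ.val.map f = Finset.univ.val.map g) :
    f ∘ Tuple.sort f = g ∘ Tuple.sort g := by
  apply List.ofFn_injective
  refine (fun h1 h2 h3 => List.Perm.eq_of_sortedLE h2 h3 h1) ?_ ?_ ?_
  · rw [← Multiset.coe_eq_coe, multiset_ofFn_sort, multiset_ofFn_sort, h]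
  · exact (Tuple.monotone_sort f).sortedLE_ofFn
  · exact (Tuple.monotone_sort g).sortedLE_ofFn

private lemma eigAsc_eq_of_charpoly {A B : Matrix (Fin n) (Fin n) ℝ}
    (hA : A.IsHermitian) (hB : B.IsHermitian) (h : A.charpoly = B.charpoly) :
    eigAsc A = eigAsc B := by
  rw [eigAsc, dif_pos hA, eigAsc, dif_pos hB]
  apply sorted_eq_of_multiset_eq
  have h2 := h
  rw [charpoly_hermitian A hA, charpoly_hermitian B hB] at h2
  have h3 := congrArg Polynomial.roots h2
  rwa [roots_multiset_prod_X_sub_C, roots_multiset_prod_X_sub_C] at h3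

private lemma eigAsc_XXt (X : Matrix (Fin n) (Fin n) ℝ) (hX : IsUnit X.det) :
    eigAsc (X * Xᵀ) = eigAsc (Xᵀ * X) := by
  have h1 : (X * Xᵀ).IsHermitian := by
    unfold Matrix.IsHermitian
    rw [real_conjTranspose, transpose_mul, transpose_transpose]
  have h2 : (Xᵀ * X).IsHermitian := by
    unfold Matrix.IsHermitian
    rw [real_conjTranspose, transpose_mul, transpose_transpose]
  have hconj : X * (Xᵀ * X) * X⁻¹ = X * Xᵀ := by
    rw [← Matrix.mul_assoc, Matrix.mul_assoc (X * Xᵀ), mul_nonsing_inv _ hX, mul_one]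
  have hcp := charpoly_conj X (Xᵀ * X) hX
  rw [hconj] at hcp
  exact eigAsc_eq_of_charpoly h1 h2 hcp

end Aux
section Aux2

open Finset

variable {n : ℕ}

private lemma card_ici (k : Fin n) : Fintype.card {j : Fin n // k ≤ j} = n - (k : ℕ) := by
  rw [Fintype.card_congr (Equiv.subtypeEquivRight (q := (· ∈ Set.Ici k)) (fun x => by simp))]
  rw [← Set.toFinset_card, Set.toFinset_Ici]; exact Fin.card_Ici k

private lemma card_iic (k : Fin n) : Fintype.card {j : Fin n // j ≤ k} = (k : ℕ) + 1 := by
  rw [Fintype.card_congr (Equiv.subtypeEquivRight (q := (· ∈ Set.Iic k)) (fun x => by simp))]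
  rw [← Set.toFinset_card, Set.toFinset_Iic]; exact Fin.card_Iic k

private lemma dot_self_pos {x : Fin n → ℝ} (hx : x ≠ 0) : 0 < x ⬝ᵥ x := by
  rcases (Finset.sum_nonneg fun i _ => mul_self_nonneg (x i)).lt_or_eq with h | h
  · exact h
  · exfalso
    apply hx
    funext i
    have := Finset.sum_eq_zero_iff_of_nonneg (fun i _ => mul_self_nonneg (x i)) |>.mp h.symm
    have hxi := this i (Finset.mem_univ i)
    simpa using mul_self_eq_zero.mp hxi

private lemma sum_dotProduct' {ι : Type*} (s : Finset ι) (v : ι → (Fin n → ℝ)) (w : Fin n → ℝ) :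
    (∑ i ∈ s, v i) ⬝ᵥ w = ∑ i ∈ s, v i ⬝ᵥ w := by
  simp only [dotProduct, Finset.sum_apply, Finset.sum_mul]
  exact Finset.sum_comm

private lemma dotProduct_sum' {ι : Type*} (s : Finset ι) (w : Fin n → ℝ) (v : ι → (Fin n → ℝ)) :
    w ⬝ᵥ (∑ i ∈ s, v i) = ∑ i ∈ s, w ⬝ᵥ v i := by
  simp only [dotProduct, Finset.sum_apply, Finset.mul_sum]
  exact Finset.sum_comm

private lemma dot_comb {ι : Type*} [Fintype ι] [DecidableEq ι] (u : ι → (Fin n → ℝ))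
    (orth : ∀ i j, u i ⬝ᵥ u j = if i = j then (1 : ℝ) else 0)
    (a b : ι → ℝ) :
    (∑ i, a i • u i) ⬝ᵥ (∑ j, b j • u j) = ∑ i, a i * b i := by
  rw [sum_dotProduct']
  refine Finset.sum_congr rfl fun i _ => ?_
  rw [smul_dotProduct, dotProduct_sum']
  have h : ∀ j, u i ⬝ᵥ b j • u j = b j * (if i = j then (1:ℝ) else 0) := by
    intro j; rw [dotProduct_smul, orth]; simp [smul_eq_mul]
  simp only [h, mul_ite, mul_one, mul_zero, Finset.sum_ite_eq Finset.univ i b,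
    Finset.mem_univ, if_true, smul_eq_mul]

private lemma li_of_orth {ι : Type*} [Fintype ι] [DecidableEq ι] (u : ι → (Fin n → ℝ))
    (orth : ∀ i j, u i ⬝ᵥ u j = if i = j then (1 : ℝ) else 0) :
    LinearIndependent ℝ u := by
  rw [Fintype.linearIndependent_iff]
  intro g hg i
  have h1 : (∑ j, g j • u j) ⬝ᵥ (∑ j, (if j = i then (1:ℝ) else 0) • u j) = g i := by
    rw [dot_comb u orth]
    simp [Finset.sum_ite_eq Finset.univ i g]
  rw [hg, zero_dotProduct] at h1
  exact h1.symm

private lemma quadform_lower (A : Matrix (Fin n) (Fin n) ℝ) {ι : Type*} [Fintype ι] [DecidableEq ι]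
    (u : ι → (Fin n → ℝ))
    (orth : ∀ i j, u i ⬝ᵥ u j = if i = j then (1 : ℝ) else 0)
    (f : ι → ℝ) (hAu : ∀ j, A *ᵥ u j = f j • u j)
    (m : ℝ) (hm : ∀ j, m ≤ f j) {x : Fin n → ℝ}
    (hx : x ∈ Submodule.span ℝ (Set.range u)) :
    m * (x ⬝ᵥ x) ≤ x ⬝ᵥ (A *ᵥ x) := by
  obtain ⟨c, rfl⟩ := (Submodule.mem_span_range_iff_exists_fun ℝ).mp hx
  have hAX : A *ᵥ (∑ j, c j • u j) = ∑ j, (c j * f j) • u j := by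
    rw [show A *ᵥ (∑ j, c j • u j) = ∑ j, A *ᵥ (c j • u j) from
      map_sum A.mulVecLin _ _]
    refine Finset.sum_congr rfl fun j _ => ?_
    rw [Matrix.mulVec_smul, hAu j, smul_smul]
  rw [hAX, dot_comb u orth, dot_comb u orth]
  have h1 : ∀ j : ι, m * (c j * c j) ≤ c j * (c j * f j) := by
    intro j
    have := mul_le_mul_of_nonneg_left (hm j) (mul_self_nonneg (c j))
    nlinarith [this]
  calc m * ∑ i, c i * c i = ∑ i, m * (c i * c i) := Finset.mul_sum _ _ _
    _ ≤ ∑ i, c i * (c i * f i) := Finset.sum_le_sum fun i _ => h1 i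

private lemma quadform_upper (A : Matrix (Fin n) (Fin n) ℝ) {ι : Type*} [Fintype ι] [DecidableEq ι]
    (u : ι → (Fin n → ℝ))
    (orth : ∀ i j, u i ⬝ᵥ u j = if i = j then (1 : ℝ) else 0)
    (f : ι → ℝ) (hAu : ∀ j, A *ᵥ u j = f j • u j)
    (M : ℝ) (hM : ∀ j, f j ≤ M) {x : Fin n → ℝ}
    (hx : x ∈ Submodule.span ℝ (Set.range u)) :
    x ⬝ᵥ (A *ᵥ x) ≤ M * (x ⬝ᵥ x) := by
  have h := quadform_lower (-A) u orth (fun j => -(f j))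
    (fun j => by rw [Matrix.neg_mulVec, hAu j, neg_smul]) (-M) (fun j => neg_le_neg (hM j)) hx
  rw [Matrix.neg_mulVec, dotProduct_neg] at h
  linarith

private lemma eigbasis_orth {A : Matrix (Fin n) (Fin n) ℝ} (hA : A.IsHermitian) (i j : Fin n) :
    (⇑(hA.eigenvectorBasis i) : Fin n → ℝ) ⬝ᵥ ⇑(hA.eigenvectorBasis j) =
      if i = j then (1:ℝ) else 0 := by
  have h := hA.eigenvectorBasis.orthonormal
  rw [orthonormal_iff_ite] at h
  have h2 := h i j
  rw [← h2]
  simp [PiLp.inner_apply, dotProduct, RCLike.inner_apply, conj_trivial]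
  exact Finset.sum_congr rfl fun _ _ => mul_comm _ _

private lemma eigAsc_le_mul (A B : Matrix (Fin n) (Fin n) ℝ)
    (hA : A.IsHermitian) (hB : B.IsHermitian)
    (c : ℝ) (hc : 0 ≤ c)
    (h : ∀ x : Fin n → ℝ, x ⬝ᵥ (A *ᵥ x) ≤ c * (x ⬝ᵥ (B *ᵥ x))) (k : Fin n) :
    eigAsc A k ≤ c * eigAsc B k := by
  classical
  rw [eigAsc, dif_pos hA, eigAsc, dif_pos hB]
  set σ := Tuple.sort hA.eigenvalues with hσ
  set τ := Tuple.sort hB.eigenvalues with hτ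
  set u : {j : Fin n // k ≤ j} → (Fin n → ℝ) :=
    (fun j => ⇑(hA.eigenvectorBasis (σ j))) with hu
  set w : {j : Fin n // j ≤ k} → (Fin n → ℝ) :=
    (fun j => ⇑(hB.eigenvectorBasis (τ j))) with hw
  have orthu : ∀ i j, u i ⬝ᵥ u j = if i = j then (1:ℝ) else 0 := by
    intro i j
    rw [hu, eigbasis_orth hA]
    simp [σ.injective.eq_iff, Subtype.coe_inj]
  have orthw : ∀ i j, w i ⬝ᵥ w j = if i = j then (1:ℝ) else 0 := by
    intro i j
    rw [hw, eigbasis_orth hB]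
    simp [τ.injective.eq_iff, Subtype.coe_inj]
  set V : Submodule ℝ (Fin n → ℝ) := Submodule.span ℝ (Set.range u) with hV
  set W : Submodule ℝ (Fin n → ℝ) := Submodule.span ℝ (Set.range w) with hW
  have hVr : Module.finrank ℝ V = n - (k : ℕ) := by
    rw [hV, finrank_span_eq_card (li_of_orth u orthu), card_ici]
  have hWr : Module.finrank ℝ W = (k : ℕ) + 1 := by
    rw [hW, finrank_span_eq_card (li_of_orth w orthw), card_iic]
  have hinf : 0 < Module.finrank ℝ (V ⊓ W : Submodule ℝ (Fin n → ℝ)) := by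
    have hsum := Submodule.finrank_sup_add_finrank_inf_eq V W
    have hle : Module.finrank ℝ (V ⊔ W : Submodule ℝ (Fin n → ℝ)) ≤ n := by
      have := Submodule.finrank_le (V ⊔ W)
      simpa using this
    have hk : (k : ℕ) < n := k.isLt
    omega
  have : Nontrivial (V ⊓ W : Submodule ℝ (Fin n → ℝ)) :=
    Module.nontrivial_of_finrank_pos hinf
  obtain ⟨y, hy⟩ := exists_ne (0 : (V ⊓ W : Submodule ℝ (Fin n → ℝ)))
  set x : Fin n → ℝ := (y : Fin n → ℝ) with hx
  have hx0 : x ≠ 0 := fun hc0 => hy (Subtype.ext hc0)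
  have hxV : x ∈ V := y.2.1
  have hxW : x ∈ W := y.2.2
  have hlow : hA.eigenvalues (σ k) * (x ⬝ᵥ x) ≤ x ⬝ᵥ (A *ᵥ x) := by
    refine quadform_lower A u orthu (fun j => hA.eigenvalues (σ j))
      (fun j => hA.mulVec_eigenvectorBasis (σ j)) _ (fun j => ?_) hxV
    exact Tuple.monotone_sort hA.eigenvalues j.2
  have hupp : x ⬝ᵥ (B *ᵥ x) ≤ hB.eigenvalues (τ k) * (x ⬝ᵥ x) := by
    refine quadform_upper B w orthw (fun j => hB.eigenvalues (τ j))
      (fun j => hB.mulVec_eigenvectorBasis (τ j)) _ (fun j => ?_) hxW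
    exact Tuple.monotone_sort hB.eigenvalues j.2
  have hxx : 0 < x ⬝ᵥ x := dot_self_pos hx0
  have hchain : hA.eigenvalues (σ k) * (x ⬝ᵥ x) ≤ (c * hB.eigenvalues (τ k)) * (x ⬝ᵥ x) := by
    calc hA.eigenvalues (σ k) * (x ⬝ᵥ x) ≤ x ⬝ᵥ (A *ᵥ x) := hlow
      _ ≤ c * (x ⬝ᵥ (B *ᵥ x)) := h x
      _ ≤ c * (hB.eigenvalues (τ k) * (x ⬝ᵥ x)) := mul_le_mul_of_nonneg_left hupp hc
      _ = (c * hB.eigenvalues (τ k)) * (x ⬝ᵥ x) := by ring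
  exact le_of_mul_le_mul_right hchain hxx

private lemma psd_quad {M : Matrix (Fin n) (Fin n) ℝ} (h : M.PosSemidef) (x : Fin n → ℝ) :
    0 ≤ x ⬝ᵥ (M *ᵥ x) := by
  simpa using h.dotProduct_mulVec_nonneg x

private lemma quad_le1 (M N : Matrix (Fin n) (Fin n) ℝ) (c : ℝ)
    (h : (c • N - M).PosSemidef) (x : Fin n → ℝ) :
    x ⬝ᵥ (M *ᵥ x) ≤ c * (x ⬝ᵥ (N *ᵥ x)) := by
  have h0 := psd_quad h x
  rw [Matrix.sub_mulVec, dotProduct_sub, Matrix.smul_mulVec,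
    dotProduct_smul] at h0
  simp only [smul_eq_mul] at h0
  linarith

private lemma quad_le2 (M N : Matrix (Fin n) (Fin n) ℝ) (ε : ℝ)
    (h : (M - Real.exp (-ε) • N).PosSemidef) (x : Fin n → ℝ) :
    x ⬝ᵥ (N *ᵥ x) ≤ Real.exp ε * (x ⬝ᵥ (M *ᵥ x)) := by
  have h0 := psd_quad h x
  rw [Matrix.sub_mulVec, dotProduct_sub, Matrix.smul_mulVec,
    dotProduct_smul] at h0
  simp only [smul_eq_mul] at h0
  have h1 : Real.exp (-ε) * (x ⬝ᵥ (N *ᵥ x)) ≤ x ⬝ᵥ (M *ᵥ x) := by linarith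
  calc x ⬝ᵥ (N *ᵥ x) = Real.exp ε * (Real.exp (-ε) * (x ⬝ᵥ (N *ᵥ x))) := by
        rw [← mul_assoc, ← Real.exp_add]; simp
    _ ≤ Real.exp ε * (x ⬝ᵥ (M *ᵥ x)) :=
        mul_le_mul_of_nonneg_left h1 (Real.exp_pos ε).le

private lemma quad_sandwich (S M : Matrix (Fin n) (Fin n) ℝ) (hS : Sᵀ = S) (x : Fin n → ℝ) :
    x ⬝ᵥ ((S * M * S) *ᵥ x) = (S *ᵥ x) ⬝ᵥ (M *ᵥ (S *ᵥ x)) := by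
  rw [← Matrix.mulVec_mulVec, ← Matrix.mulVec_mulVec, Matrix.dotProduct_mulVec x S, ← hS,
    Matrix.vecMul_transpose, hS]

private lemma herm_sandwich {S M : Matrix (Fin n) (Fin n) ℝ}
    (hS : S.IsHermitian) (hM : M.IsHermitian) : (S * M * S).IsHermitian := by
  unfold Matrix.IsHermitian at *
  rw [Matrix.conjTranspose_mul, Matrix.conjTranspose_mul, hS, hM, Matrix.mul_assoc]

end Aux2
set_option maxHeartbeats 1000000 in
/-- Separation principle for joint approximation: if
`e^{-ε₁} I ⪯ T⁻¹ P_s T⁻ᵀ ⪯ e^{ε₁} I` with `T = P^{1/2}`, and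
`e^{-ε₂} Tᵀ Q T ⪯ Tᵀ Q_s T ⪯ e^{ε₂} Tᵀ Q T`, then every eigenvalue of
`Q_s^{1/2} P_s Q_s^{1/2}` lies within factor `e^{±(ε₁+ε₂)}` of the corresponding
eigenvalue of `Q^{1/2} P Q^{1/2}`. -/
theorem separation_principle
    (n : ℕ) (P Q Ps Qs : Matrix (Fin n) (Fin n) ℝ) (ε₁ ε₂ : ℝ)
    (hε₁ : 0 < ε₁) (hε₂ : 0 < ε₂)
    (hP : P.PosDef) (hQ : Q.PosDef) (hPs : Ps.PosDef) (hQs : Qs.PosDef)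
    (h1low : ((hP.posSemidef.sqrt)⁻¹ * Ps * ((hP.posSemidef.sqrt)⁻¹)ᵀ -
        Real.exp (-ε₁) • (1 : Matrix (Fin n) (Fin n) ℝ)).PosSemidef)
    (h1upp : (Real.exp ε₁ • (1 : Matrix (Fin n) (Fin n) ℝ) -
        (hP.posSemidef.sqrt)⁻¹ * Ps * ((hP.posSemidef.sqrt)⁻¹)ᵀ).PosSemidef)
    (h2low : ((hP.posSemidef.sqrt)ᵀ * Qs * hP.posSemidef.sqrt -
        Real.exp (-ε₂) • ((hP.posSemidef.sqrt)ᵀ * Q * hP.posSemidef.sqrt)).PosSemidef)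
    (h2upp : (Real.exp ε₂ • ((hP.posSemidef.sqrt)ᵀ * Q * hP.posSemidef.sqrt) -
        (hP.posSemidef.sqrt)ᵀ * Qs * hP.posSemidef.sqrt).PosSemidef) :
    ∀ i : Fin n,
      Real.exp (-(ε₁ + ε₂)) * eigAsc (hQ.posSemidef.sqrt * P * hQ.posSemidef.sqrt) i ≤
        eigAsc (hQs.posSemidef.sqrt * Ps * hQs.posSemidef.sqrt) i ∧
      eigAsc (hQs.posSemidef.sqrt * Ps * hQs.posSemidef.sqrt) i ≤
        Real.exp (ε₁ + ε₂) * eigAsc (hQ.posSemidef.sqrt * P * hQ.posSemidef.sqrt) i := by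
  intro k
  set T := hP.posSemidef.sqrt with hTdef
  set Ss := hQs.posSemidef.sqrt with hSsdef
  set Sq := hQ.posSemidef.sqrt with hSqdef
  -- basic facts about the square roots
  have hTh : T.IsHermitian := (psd_sqrt_aux hP.posSemidef).1.1
  have hSsh : Ss.IsHermitian := (psd_sqrt_aux hQs.posSemidef).1.1
  have hSqh : Sq.IsHermitian := (psd_sqrt_aux hQ.posSemidef).1.1
  have hTt : Tᵀ = T := by rw [← real_conjTranspose]; exact hTh
  have hSst : Ssᵀ = Ss := by rw [← real_conjTranspose]; exact hSsh
  have hSqt : Sqᵀ = Sq := by rw [← real_conjTranspose]; exact hSqh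
  have hTT : T * T = P := (psd_sqrt_aux hP.posSemidef).2
  have hSsSs : Ss * Ss = Qs := (psd_sqrt_aux hQs.posSemidef).2
  have hSqSq : Sq * Sq = Q := (psd_sqrt_aux hQ.posSemidef).2
  have detaux : ∀ (S M : Matrix (Fin n) (Fin n) ℝ), S * S = M → M.PosDef → IsUnit S.det := by
    intro S M hSM hM
    have h1 : S.det * S.det = M.det := by rw [← det_mul, hSM]
    have h2 := hM.det_pos
    refine isUnit_iff_ne_zero.mpr fun h0 => ?_
    rw [h0, mul_zero] at h1
    rw [← h1] at h2
    exact lt_irrefl _ h2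
  have hdetT : IsUnit T.det := detaux T P hTT hP
  have hdetSs : IsUnit Ss.det := detaux Ss Qs hSsSs hQs
  have hdetSq : IsUnit Sq.det := detaux Sq Q hSqSq hQ
  clear_value T Ss Sq
  -- translate hypotheses into Loewner-type bounds on `Ps` vs `P`
  have hTinvT : (T⁻¹)ᵀ = T⁻¹ := by rw [transpose_nonsing_inv, hTt]
  have hconjT : ∀ M : Matrix (Fin n) (Fin n) ℝ, T * (T⁻¹ * M * T⁻¹) * T = M := by
    intro M
    simp only [← Matrix.mul_assoc]
    rw [mul_nonsing_inv _ hdetT, one_mul, Matrix.mul_assoc, nonsing_inv_mul _ hdetT, mul_one]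
  have hconjTinv : ∀ M : Matrix (Fin n) (Fin n) ℝ, T⁻¹ * (T * M * T) * T⁻¹ = M := by
    intro M
    simp only [← Matrix.mul_assoc]
    rw [nonsing_inv_mul _ hdetT, one_mul, Matrix.mul_assoc, mul_nonsing_inv _ hdetT, mul_one]
  have hPsU : (Real.exp ε₁ • P - Ps).PosSemidef := by
    have hcong := h1upp.mul_mul_conjTranspose_same T
    have heq : T * (Real.exp ε₁ • (1 : Matrix (Fin n) (Fin n) ℝ) -
        T⁻¹ * Ps * (T⁻¹)ᵀ) * Tᴴ = Real.exp ε₁ • P - Ps := by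
      rw [real_conjTranspose, hTt, hTinvT, Matrix.mul_sub, Matrix.sub_mul]
      congr 1
      · rw [Matrix.mul_smul, Matrix.smul_mul, mul_one, hTT]
      · exact hconjT Ps
    rwa [heq] at hcong
  have hPsL : (Ps - Real.exp (-ε₁) • P).PosSemidef := by
    have hcong := h1low.mul_mul_conjTranspose_same T
    have heq : T * (T⁻¹ * Ps * (T⁻¹)ᵀ -
        Real.exp (-ε₁) • (1 : Matrix (Fin n) (Fin n) ℝ)) * Tᴴ = Ps - Real.exp (-ε₁) • P := by
      rw [real_conjTranspose, hTt, hTinvT, Matrix.mul_sub, Matrix.sub_mul]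
      congr 1
      · exact hconjT Ps
      · rw [Matrix.mul_smul, Matrix.smul_mul, mul_one, hTT]
    rwa [heq] at hcong
  have hQsU : (Real.exp ε₂ • Q - Qs).PosSemidef := by
    have hcong := h2upp.mul_mul_conjTranspose_same T⁻¹
    have heq : T⁻¹ * (Real.exp ε₂ • (Tᵀ * Q * T) - Tᵀ * Qs * T) * (T⁻¹)ᴴ =
        Real.exp ε₂ • Q - Qs := by
      rw [real_conjTranspose, hTinvT, hTt, Matrix.mul_sub, Matrix.sub_mul]
      congr 1
      · rw [Matrix.mul_smul, Matrix.smul_mul, hconjTinv Q]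
      · exact hconjTinv Qs
    rwa [heq] at hcong
  have hQsL : (Qs - Real.exp (-ε₂) • Q).PosSemidef := by
    have hcong := h2low.mul_mul_conjTranspose_same T⁻¹
    have heq : T⁻¹ * (Tᵀ * Qs * T - Real.exp (-ε₂) • (Tᵀ * Q * T)) * (T⁻¹)ᴴ =
        Qs - Real.exp (-ε₂) • Q := by
      rw [real_conjTranspose, hTinvT, hTt, Matrix.mul_sub, Matrix.sub_mul]
      congr 1
      · exact hconjTinv Qs
      · rw [Matrix.mul_smul, Matrix.smul_mul, hconjTinv Q]
    rwa [heq] at hcong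
  -- quadratic form bounds
  have qPs_upp := quad_le1 Ps P (Real.exp ε₁) hPsU
  have qP_upp := quad_le2 Ps P ε₁ hPsL
  have qQs_upp := quad_le1 Qs Q (Real.exp ε₂) hQsU
  have qQ_upp := quad_le2 Qs Q ε₂ hQsL
  -- Hermitian facts for the five matrices
  have hM1 : (Ss * Ps * Ss).IsHermitian := herm_sandwich hSsh hPs.1
  have hM2 : (Ss * P * Ss).IsHermitian := herm_sandwich hSsh hP.1
  have hM3 : (T * Qs * T).IsHermitian := herm_sandwich hTh hQs.1
  have hM4 : (T * Q * T).IsHermitian := herm_sandwich hTh hQ.1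
  have hM5 : (Sq * P * Sq).IsHermitian := herm_sandwich hSqh hP.1
  -- step 1 : compare Ss Ps Ss with Ss P Ss
  have step1 : eigAsc (Ss * Ps * Ss) k ≤ Real.exp ε₁ * eigAsc (Ss * P * Ss) k := by
    refine eigAsc_le_mul _ _ hM1 hM2 _ (Real.exp_pos ε₁).le (fun x => ?_) k
    rw [quad_sandwich Ss Ps hSst, quad_sandwich Ss P hSst]
    exact qPs_upp _
  have step1' : eigAsc (Ss * P * Ss) k ≤ Real.exp ε₁ * eigAsc (Ss * Ps * Ss) k := by
    refine eigAsc_le_mul _ _ hM2 hM1 _ (Real.exp_pos ε₁).le (fun x => ?_) k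
    rw [quad_sandwich Ss Ps hSst, quad_sandwich Ss P hSst]
    exact qP_upp _
  -- step 2 : eigAsc (Ss P Ss) = eigAsc (T Qs T)
  have step2 : eigAsc (Ss * P * Ss) = eigAsc (T * Qs * T) := by
    have hXdet : IsUnit (Ss * T).det := by rw [det_mul]; exact hdetSs.mul hdetT
    have e2a : Ss * P * Ss = (Ss * T) * (Ss * T)ᵀ := by
      rw [transpose_mul, hSst, hTt, Matrix.mul_assoc Ss T (T * Ss),
        ← Matrix.mul_assoc T T Ss, hTT, ← Matrix.mul_assoc]
    have e2b : T * Qs * T = (Ss * T)ᵀ * (Ss * T) := by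
      rw [transpose_mul, hSst, hTt, Matrix.mul_assoc T Ss (Ss * T),
        ← Matrix.mul_assoc Ss Ss T, hSsSs, ← Matrix.mul_assoc]
    rw [e2a, e2b, eigAsc_XXt _ hXdet]
  -- step 3 : compare T Qs T with T Q T
  have step3 : eigAsc (T * Qs * T) k ≤ Real.exp ε₂ * eigAsc (T * Q * T) k := by
    refine eigAsc_le_mul _ _ hM3 hM4 _ (Real.exp_pos ε₂).le (fun x => ?_) k
    rw [quad_sandwich T Qs hTt, quad_sandwich T Q hTt]
    exact qQs_upp _
  have step3' : eigAsc (T * Q * T) k ≤ Real.exp ε₂ * eigAsc (T * Qs * T) k := by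
    refine eigAsc_le_mul _ _ hM4 hM3 _ (Real.exp_pos ε₂).le (fun x => ?_) k
    rw [quad_sandwich T Qs hTt, quad_sandwich T Q hTt]
    exact qQ_upp _
  -- step 4 : eigAsc (T Q T) = eigAsc (Sq P Sq)
  have step4 : eigAsc (T * Q * T) = eigAsc (Sq * P * Sq) := by
    have hYdet : IsUnit (T * Sq).det := by rw [det_mul]; exact hdetT.mul hdetSq
    have e4a : T * Q * T = (T * Sq) * (T * Sq)ᵀ := by
      rw [transpose_mul, hSqt, hTt, Matrix.mul_assoc T Sq (Sq * T),
        ← Matrix.mul_assoc Sq Sq T, hSqSq, ← Matrix.mul_assoc]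
    have e4b : Sq * P * Sq = (T * Sq)ᵀ * (T * Sq) := by
      rw [transpose_mul, hSqt, hTt, Matrix.mul_assoc Sq T (T * Sq),
        ← Matrix.mul_assoc T T Sq, hTT, ← Matrix.mul_assoc]
    rw [e4a, e4b, eigAsc_XXt _ hYdet]
  constructor
  · -- lower bound
    have hrev : eigAsc (Sq * P * Sq) k ≤ Real.exp (ε₁ + ε₂) * eigAsc (Ss * Ps * Ss) k := by
      calc eigAsc (Sq * P * Sq) k = eigAsc (T * Q * T) k := by rw [step4]
        _ ≤ Real.exp ε₂ * eigAsc (T * Qs * T) k := step3'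
        _ = Real.exp ε₂ * eigAsc (Ss * P * Ss) k := by rw [step2]
        _ ≤ Real.exp ε₂ * (Real.exp ε₁ * eigAsc (Ss * Ps * Ss) k) :=
            mul_le_mul_of_nonneg_left step1' (Real.exp_pos ε₂).le
        _ = Real.exp (ε₁ + ε₂) * eigAsc (Ss * Ps * Ss) k := by
            rw [Real.exp_add]; ring
    have := mul_le_mul_of_nonneg_left hrev (Real.exp_pos (-(ε₁ + ε₂))).le
    calc Real.exp (-(ε₁ + ε₂)) * eigAsc (Sq * P * Sq) k
        ≤ Real.exp (-(ε₁ + ε₂)) * (Real.exp (ε₁ + ε₂) * eigAsc (Ss * Ps * Ss) k) := this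
      _ = eigAsc (Ss * Ps * Ss) k := by
          rw [← mul_assoc, ← Real.exp_add, show -(ε₁ + ε₂) + (ε₁ + ε₂) = 0 by ring,
            Real.exp_zero, one_mul]
  · -- upper bound
    calc eigAsc (Ss * Ps * Ss) k ≤ Real.exp ε₁ * eigAsc (Ss * P * Ss) k := step1
      _ = Real.exp ε₁ * eigAsc (T * Qs * T) k := by rw [step2]
      _ ≤ Real.exp ε₁ * (Real.exp ε₂ * eigAsc (T * Q * T) k) :=
          mul_le_mul_of_nonneg_left step3 (Real.exp_pos ε₁).le
      _ = Real.exp (ε₁ + ε₂) * eigAsc (Sq * P * Sq) k := by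
          rw [step4, Real.exp_add]; ring
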